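/- Let μ1, μ2, σ1, σ2 be strictly positive reals and let Y be a standard normal random variable (so X1 := μ1 + σ1·Y and X2 := μ2 − σ2·Y are jointly normal with correlation −1). Then the law of R := X1/X2, i.e. the pushforward of the standard Gaussian measure on ℝ under the map y ↦ (μ1 + σ1·y)/(μ2 − σ2·y), is absolutely continuous with respect to Lebesgue measure with density f_R(x) = ((μ1σ2 + μ2σ1)/√(2π)) · exp(−(1/2)·((μ2x − μ1)/(σ2x + σ1))²) / (σ2x + σ1)², where f_R(−σ1/σ2) := 0. -/

import Mathlib

open Real MeasureTheory Set

/-- The standard Gaussian measure on `ℝ`, with density `(2π)^(−1/2) exp(−y²/2)`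
with respect to Lebesgue measure. -/
noncomputable def stdGaussian : Measure ℝ :=
  volume.withDensity fun y => ENNReal.ofReal ((2 * π) ^ (-(1 / 2) : ℝ) * Real.exp (-y ^ 2 / 2))

theorem quotient_density_perfect_anticorrelation
    (μ1 μ2 σ1 σ2 : ℝ) (hμ1 : 0 < μ1) (hμ2 : 0 < μ2) (hσ1 : 0 < σ1) (hσ2 : 0 < σ2) :
    Measure.map (fun y : ℝ => (μ1 + σ1 * y) / (μ2 - σ2 * y)) stdGaussian =
      volume.withDensity fun x : ℝ => ENNReal.ofReal
        (if x = -σ1 / σ2 then 0 else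
          (μ1 * σ2 + μ2 * σ1) / Real.sqrt (2 * π) *
            Real.exp (-(1 / 2) * ((μ2 * x - μ1) / (σ2 * x + σ1)) ^ 2) /
              (σ2 * x + σ1) ^ 2) := by
  have hc : 0 < μ1 * σ2 + μ2 * σ1 := by positivity
  set f : ℝ → ℝ := fun y => (μ1 + σ1 * y) / (μ2 - σ2 * y) with hfdef
  set g : ℝ → ℝ := fun x => (μ2 * x - μ1) / (σ2 * x + σ1) with hgdef
  set φ : ℝ → ENNReal := fun y =>
    ENNReal.ofReal ((2 * π) ^ (-(1 / 2) : ℝ) * Real.exp (-y ^ 2 / 2)) with hφdef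
  have hden : ∀ x : ℝ, x ≠ -σ1 / σ2 → σ2 * x + σ1 ≠ 0 := by
    intro x hx h
    apply hx
    field_simp
    linarith
  have hfg : ∀ x : ℝ, x ≠ -σ1 / σ2 → f (g x) = x := by
    intro x hx
    have hv := hden x hx
    have hden2 : μ2 - σ2 * ((μ2 * x - μ1) / (σ2 * x + σ1))
        = (μ1 * σ2 + μ2 * σ1) / (σ2 * x + σ1) := by
      field_simp
      ring
    have hden2' : μ2 - σ2 * ((μ2 * x - μ1) / (σ2 * x + σ1)) ≠ 0 := by
      rw [hden2]
      exact div_ne_zero hc.ne' hv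
    simp only [hfdef, hgdef]
    rw [div_eq_iff hden2']
    linear_combination div_mul_cancel₀ (μ2 * x - μ1) hv
  have hgne : ∀ x : ℝ, x ≠ -σ1 / σ2 → g x ≠ μ2 / σ2 := by
    intro x hx h
    have hv := hden x hx
    simp only [hgdef] at h
    rw [div_eq_div_iff hv hσ2.ne'] at h
    nlinarith
  have hgf : ∀ y : ℝ, y ≠ μ2 / σ2 → g (f y) = y ∧ f y ≠ -σ1 / σ2 := by
    intro y hy
    have hv : μ2 - σ2 * y ≠ 0 := by
      intro h; apply hy; field_simp; linarith
    have hfy : f y ≠ -σ1 / σ2 := by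
      intro h
      have : σ2 * (μ1 + σ1 * y) = -σ1 * (μ2 - σ2 * y) := by
        rw [hfdef] at h
        field_simp at h
        rw [div_eq_iff (by rwa [mul_comm y σ2])] at h
        linarith
      nlinarith
    refine ⟨?_, hfy⟩
    have hden2 : σ2 * ((μ1 + σ1 * y) / (μ2 - σ2 * y)) + σ1
        = (μ1 * σ2 + μ2 * σ1) / (μ2 - σ2 * y) := by
      field_simp
      ring
    have hden2' : σ2 * ((μ1 + σ1 * y) / (μ2 - σ2 * y)) + σ1 ≠ 0 := by
      rw [hden2]
      exact div_ne_zero hc.ne' hv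
    simp only [hgdef, hfdef]
    rw [div_eq_iff hden2']
    linear_combination div_mul_cancel₀ (μ1 + σ1 * y) hv
  have hfm : Measurable f := by
    apply Measurable.div <;> fun_prop
  refine Measure.ext fun A hA => ?_
  rw [Measure.map_apply hfm hA, stdGaussian, withDensity_apply _ (hfm hA),
    withDensity_apply _ hA]
  -- reduce both sides to integrals over sets avoiding the bad points
  have hms : MeasurableSet {x : ℝ | x ≠ -σ1 / σ2} :=
    (measurableSet_singleton (-σ1 / σ2)).compl
  have hAs : A =ᵐ[volume] ((A ∩ {x : ℝ | x ≠ -σ1 / σ2} : Set ℝ)) := by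
    refine (ae_eq_set.2 ⟨?_, ?_⟩)
    · refine measure_mono_null (fun x hx => ?_) (measure_singleton (-σ1 / σ2))
      rcases hx with ⟨hxA, hxn⟩
      simp only [mem_inter_iff, mem_setOf_eq, not_and, not_not] at hxn
      exact hxn hxA
    · refine measure_mono_null (fun x hx => ?_) (measure_singleton (-σ1 / σ2))
      exact (hx.2 hx.1.1).elim
  have hBs : (f ⁻¹' A) =ᵐ[volume] ((f ⁻¹' A ∩ {y : ℝ | y ≠ μ2 / σ2} : Set ℝ)) := by
    refine (ae_eq_set.2 ⟨?_, ?_⟩)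
    · refine measure_mono_null (fun y hy => ?_) (measure_singleton (μ2 / σ2))
      rcases hy with ⟨hyA, hyn⟩
      simp only [mem_inter_iff, mem_setOf_eq, not_and, not_not] at hyn
      exact hyn hyA
    · refine measure_mono_null (fun y hy => ?_) (measure_singleton (μ2 / σ2))
      exact (hy.2 hy.1.1).elim
  rw [setLIntegral_congr hAs, setLIntegral_congr hBs]
  set s : Set ℝ := A ∩ {x : ℝ | x ≠ -σ1 / σ2} with hsdef
  have hsm : MeasurableSet s := hA.inter hms
  -- derivative of g on s
  have hderiv : ∀ x ∈ s, HasDerivWithinAt g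
      ((μ1 * σ2 + μ2 * σ1) / (σ2 * x + σ1) ^ 2) s x := by
    intro x hx
    have hv := hden x hx.2
    have h1 : HasDerivAt (fun x : ℝ => μ2 * x - μ1) μ2 x := by
      simpa using ((hasDerivAt_id x).const_mul μ2).sub_const μ1
    have h2 : HasDerivAt (fun x : ℝ => σ2 * x + σ1) σ2 x := by
      simpa using ((hasDerivAt_id x).const_mul σ2).add_const σ1
    have := h1.div h2 hv
    have heq : (μ2 * (σ2 * x + σ1) - (μ2 * x - μ1) * σ2) / (σ2 * x + σ1) ^ 2
        = (μ1 * σ2 + μ2 * σ1) / (σ2 * x + σ1) ^ 2 := by ring_nf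
    rw [heq] at this
    exact this.hasDerivWithinAt
  have hinj : InjOn g s := by
    intro x hx x' hx' h
    have := hfg x hx.2
    have := hfg x' hx'.2
    rw [← hfg x hx.2, ← hfg x' hx'.2, h]
  -- image of s under g
  have himg : g '' s = f ⁻¹' A ∩ {y : ℝ | y ≠ μ2 / σ2} := by
    ext y
    constructor
    · rintro ⟨x, ⟨hxA, hxn⟩, rfl⟩
      refine ⟨?_, hgne x hxn⟩
      simp only [mem_preimage, hfg x hxn]
      exact hxA
    · rintro ⟨hyA, hyn⟩
      obtain ⟨hgy, hfy⟩ := hgf y hyn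
      exact ⟨f y, ⟨hyA, hfy⟩, hgy⟩
  -- change of variables
  have key := lintegral_image_eq_lintegral_abs_det_fderiv_mul volume hsm
    (fun x hx => (hderiv x hx).hasFDerivWithinAt) hinj φ
  simp only [ContinuousLinearMap.det_toSpanSingleton] at key
  rw [himg] at key
  rw [key]
  -- pointwise equality of the densities on s
  refine setLIntegral_congr_fun hsm (fun x hx => ?_)
  have hv := hden x hx.2
  have hv2 : (0:ℝ) < (σ2 * x + σ1) ^ 2 := by positivity
  rw [if_neg hx.2]
  rw [abs_of_pos (by positivity : (0:ℝ) < (μ1 * σ2 + μ2 * σ1) / (σ2 * x + σ1) ^ 2)]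
  rw [hφdef]
  rw [← ENNReal.ofReal_mul (by positivity)]
  congr 1
  have hrpow : (2 * π) ^ (-(1 / 2) : ℝ) = (Real.sqrt (2 * π))⁻¹ := by
    rw [Real.rpow_neg (by positivity), Real.sqrt_eq_rpow]
  rw [hrpow]
  have hexp : Real.exp (-(g x) ^ 2 / 2) = Real.exp (-(1 / 2) * (g x) ^ 2) := by
    ring_nf
  rw [hexp]
  ring
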